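/- Let A = Σ_{i=1}^{N} A_i and B = Σ_{j=1}^{N} B_j be extensive operators of ranges R_A and R_B respectively, with local norms ‖A‖_l ≤ a and ‖B‖_l ≤ b. Then there exists a family (C_i)_{i=1,…,N} of matrices such that each C_i is supported on {i, i+1, …, min(i+R_A+R_B−2, N)}, the commutator satisfies [A, B] = Σ_{i=1}^{N} C_i, and max_i ‖C_i‖ ≤ 2(R_A + R_B − 1)·a·b. -/

import Mathlib

open scoped BigOperators Matrix.Norms.L2Operator

/-- A matrix acting on the configuration space `Fin N → Fin d` is *supported* on a set `S`
of sites if `A x y = 0` whenever the configurations `x, y` differ at some site outside `S`,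
and `A x y` depends only on the restrictions of `x` and `y` to `S`. -/
def SupportedOn {N d : ℕ} (A : Matrix (Fin N → Fin d) (Fin N → Fin d) ℂ)
    (S : Set (Fin N)) : Prop :=
  (∀ x y, (∃ i ∉ S, x i ≠ y i) → A x y = 0) ∧
  (∀ x y x' y', (∀ i ∈ S, x i = x' i) → (∀ i ∈ S, y i = y' i) →
    (∀ i ∉ S, x i = y i) → (∀ i ∉ S, x' i = y' i) → A x y = A x' y')

namespace SupportedOn
variable {N d : ℕ} {A B : Matrix (Fin N → Fin d) (Fin N → Fin d) ℂ} {S S' : Set (Fin N)}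

lemma zero' : SupportedOn (0 : Matrix (Fin N → Fin d) (Fin N → Fin d) ℂ) S :=
  ⟨fun _ _ _ => rfl, fun _ _ _ _ _ _ _ _ => rfl⟩

lemma sub (hA : SupportedOn A S) (hB : SupportedOn B S) : SupportedOn (A - B) S := by
  constructor
  · intro x y h; simp [Matrix.sub_apply, hA.1 x y h, hB.1 x y h]
  · intro x y x' y' h1 h2 h3 h4
    simp [Matrix.sub_apply, hA.2 x y x' y' h1 h2 h3 h4, hB.2 x y x' y' h1 h2 h3 h4]

lemma add (hA : SupportedOn A S) (hB : SupportedOn B S) : SupportedOn (A + B) S := by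
  constructor
  · intro x y h; simp [Matrix.add_apply, hA.1 x y h, hB.1 x y h]
  · intro x y x' y' h1 h2 h3 h4
    simp [Matrix.add_apply, hA.2 x y x' y' h1 h2 h3 h4, hB.2 x y x' y' h1 h2 h3 h4]

lemma mono (hA : SupportedOn A S) (h : S ⊆ S') : SupportedOn A S' := by
  constructor
  · intro x y ⟨i, hi, hne⟩; exact hA.1 x y ⟨i, fun hiS => hi (h hiS), hne⟩
  · intro x y x' y' h1 h2 h3 h4
    by_cases hc : ∃ p, p ∉ S ∧ x p ≠ y p
    · obtain ⟨p, hp, hne⟩ := hc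
      rw [hA.1 x y ⟨p, hp, hne⟩, hA.1 x' y' ⟨p, hp, ?_⟩]
      by_cases hp' : p ∈ S'
      · rw [← h1 p hp', ← h2 p hp']; exact hne
      · exact absurd (h3 p hp') hne
    · push_neg at hc
      have hc' : ∀ p, p ∉ S → x' p = y' p := by
        intro p hp
        by_cases hp' : p ∈ S'
        · rw [← h1 p hp', ← h2 p hp']; exact hc p hp
        · exact h4 p hp'
      exact hA.2 x y x' y' (fun i hi => h1 i (h hi)) (fun i hi => h2 i (h hi)) hc hc'

lemma mul (hA : SupportedOn A S) (hB : SupportedOn B S) : SupportedOn (A * B) S := by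
  classical
  constructor
  · intro x y ⟨p, hp, hne⟩
    rw [Matrix.mul_apply]
    refine Finset.sum_eq_zero fun z _ => ?_
    by_cases hz : ∃ q, q ∉ S ∧ x q ≠ z q
    · rw [hA.1 x z hz, zero_mul]
    · push_neg at hz
      rw [hB.1 z y ⟨p, hp, by rw [← hz p hp]; exact hne⟩, mul_zero]
  · intro x y x' y' h1 h2 h3 h4
    rw [Matrix.mul_apply, Matrix.mul_apply]
    have key : ∀ (u v : Fin N → Fin d), (∀ i ∉ S, u i = v i) →
        ∑ z, A u z * B z v = ∑ z ∈ Finset.univ.filter (fun z => ∀ i ∉ S, z i = u i),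
          A u z * B z v := by
      intro u v _
      rw [Finset.sum_filter]
      refine Finset.sum_congr rfl fun z _ => ?_
      split_ifs with hz
      · rfl
      · push_neg at hz
        obtain ⟨q, hq, hne⟩ := hz
        rw [hA.1 u z ⟨q, hq, fun e => hne e.symm⟩, zero_mul]
    rw [key x y h3, key x' y' h4]
    refine Finset.sum_nbij' (fun z => fun i => if i ∈ S then z i else x' i)
      (fun z => fun i => if i ∈ S then z i else x i) ?_ ?_ ?_ ?_ ?_
    · intro z hz
      simp only [Finset.mem_filter, Finset.mem_univ, true_and] at *
      intro i hi; simp [hi]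
    · intro z hz
      simp only [Finset.mem_filter, Finset.mem_univ, true_and] at *
      intro i hi; simp [hi]
    · intro z hz
      simp only [Finset.mem_filter, Finset.mem_univ, true_and] at hz
      funext i
      by_cases hi : i ∈ S <;> simp [hi, hz i]
    · intro z hz
      simp only [Finset.mem_filter, Finset.mem_univ, true_and] at hz
      funext i
      by_cases hi : i ∈ S <;> simp [hi, hz i]
    · intro z hz
      simp only [Finset.mem_filter, Finset.mem_univ, true_and] at hz
      congr 1
      · refine hA.2 x z x' _ h1 (fun i hi => by simp [hi]) ?_ ?_
        · intro i hi; exact (hz i hi).symm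
        · intro i hi; simp [hi]
      · refine hB.2 z y _ y' (fun i hi => by simp [hi]) h2 ?_ ?_
        · intro i hi; rw [hz i hi, h3 i hi]
        · intro i hi; simp [hi, h4 i hi]

lemma fsum {ι : Type*} (s : Finset ι) (f : ι → Matrix (Fin N → Fin d) (Fin N → Fin d) ℂ)
    (h : ∀ i ∈ s, SupportedOn (f i) S) : SupportedOn (∑ i ∈ s, f i) S :=
  Finset.sum_induction f (fun M => SupportedOn M S) (fun _ _ hu hv => hu.add hv) zero' h

end SupportedOn

lemma commute_of_disjoint {N d : ℕ} {A B : Matrix (Fin N → Fin d) (Fin N → Fin d) ℂ}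
    {S T : Set (Fin N)} (hA : SupportedOn A S) (hB : SupportedOn B T)
    (hST : Disjoint S T) : A * B = B * A := by
  classical
  ext x y
  rw [Matrix.mul_apply, Matrix.mul_apply]
  by_cases hc : ∃ p, p ∉ S ∪ T ∧ x p ≠ y p
  · obtain ⟨p, hp, hne⟩ := hc
    have hpS : p ∉ S := fun h => hp (Set.mem_union_left _ h)
    have hpT : p ∉ T := fun h => hp (Set.mem_union_right _ h)
    rw [Finset.sum_eq_zero, Finset.sum_eq_zero]
    · intro z _
      by_cases hz : ∃ q, q ∉ T ∧ x q ≠ z q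
      · rw [hB.1 x z hz, zero_mul]
      · push_neg at hz
        rw [hA.1 z y ⟨p, hpS, by rw [← hz p hpT]; exact hne⟩, mul_zero]
    · intro z _
      by_cases hz : ∃ q, q ∉ S ∧ x q ≠ z q
      · rw [hA.1 x z hz, zero_mul]
      · push_neg at hz
        rw [hB.1 z y ⟨p, hpT, by rw [← hz p hpS]; exact hne⟩, mul_zero]
  · push_neg at hc
    set z0 : Fin N → Fin d := fun i => if i ∈ S then y i else x i with hz0
    set w0 : Fin N → Fin d := fun i => if i ∈ T then y i else x i with hw0
    rw [Finset.sum_eq_single z0, Finset.sum_eq_single w0]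
    · have e1 : A x z0 = A w0 y := by
        refine hA.2 x z0 w0 y ?_ ?_ ?_ ?_
        · intro i hi
          have : i ∉ T := fun h => (Set.disjoint_left.mp hST hi) h
          simp [hw0, this]
        · intro i hi; simp [hz0, hi]
        · intro i hi; simp [hz0, hi]
        · intro i hi
          by_cases hiT : i ∈ T
          · simp [hw0, hiT]
          · simp [hw0, hiT, hc i (by simp [hi, hiT])]
      have e2 : B z0 y = B x w0 := by
        refine hB.2 z0 y x w0 ?_ ?_ ?_ ?_
        · intro i hi
          have : i ∉ S := fun h => (Set.disjoint_left.mp hST h) hi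
          simp [hz0, this]
        · intro i hi; simp [hw0, hi]
        · intro i hi
          by_cases hiS : i ∈ S
          · simp [hz0, hiS]
          · simp [hz0, hiS, hc i (by simp [hi, hiS])]
        · intro i hi; simp [hw0, hi]
      rw [e1, e2]; ring
    · intro z _ hz
      have : ∃ p, z p ≠ w0 p := by
        by_contra h; push_neg at h; exact hz (funext h)
      obtain ⟨p, hp⟩ := this
      by_cases hpT : p ∈ T
      · have hpS : p ∉ S := fun h => (Set.disjoint_left.mp hST h) hpT
        rw [hA.1 z y ⟨p, hpS, by simpa [hw0, hpT] using hp⟩, mul_zero]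
      · rw [hB.1 x z ⟨p, hpT, fun e => hp (by simp [hw0, hpT, ← e])⟩, zero_mul]
    · intro h; exact absurd (Finset.mem_univ w0) h
    · intro z _ hz
      have : ∃ p, z p ≠ z0 p := by
        by_contra h; push_neg at h; exact hz (funext h)
      obtain ⟨p, hp⟩ := this
      by_cases hpS : p ∈ S
      · have hpT : p ∉ T := fun h => (Set.disjoint_left.mp hST hpS) h
        rw [hB.1 z y ⟨p, hpT, by simpa [hz0, hpS] using hp⟩, mul_zero]
      · rw [hA.1 x z ⟨p, hpS, fun e => hp (by simp [hz0, hpS, ← e])⟩, zero_mul]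
    · intro h; exact absurd (Finset.mem_univ z0) h

/-- if `A = Σᵢ Aᵢ` and `B = Σᵢ Bᵢ` are extensive operators of ranges `R_A`,
`R_B` with local norms `≤ a` and `≤ b`, then `[A,B] = Σᵢ Cᵢ` where each `Cᵢ` is supported
on an interval of `R_A + R_B − 1` sites starting at `i`, with `‖Cᵢ‖ ≤ 2(R_A+R_B−1)ab`. -/
theorem commutator_of_extensive_operators {N d : ℕ} (hd : 2 ≤ d) (hN : 1 ≤ N)
    (RA RB : ℕ) (hRA : 1 ≤ RA) (hRB : 1 ≤ RB) (a b : ℝ)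
    (A B : Fin N → Matrix (Fin N → Fin d) (Fin N → Fin d) ℂ)
    (hA : ∀ i, SupportedOn (A i) {j : Fin N | (i : ℕ) ≤ (j : ℕ) ∧ (j : ℕ) < (i : ℕ) + RA})
    (hB : ∀ i, SupportedOn (B i) {j : Fin N | (i : ℕ) ≤ (j : ℕ) ∧ (j : ℕ) < (i : ℕ) + RB})
    (ha : ∀ i, ‖A i‖ ≤ a) (hb : ∀ i, ‖B i‖ ≤ b) :
    ∃ C : Fin N → Matrix (Fin N → Fin d) (Fin N → Fin d) ℂ,
      (∀ i, SupportedOn (C i)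
        {j : Fin N | (i : ℕ) ≤ (j : ℕ) ∧ (j : ℕ) < (i : ℕ) + (RA + RB - 1)}) ∧
      (∑ i, A i) * (∑ i, B i) - (∑ i, B i) * (∑ i, A i) = ∑ i, C i ∧
      ∀ i, ‖C i‖ ≤ 2 * ((RA : ℝ) + (RB : ℝ) - 1) * a * b := by
  classical
  have ha0 : 0 ≤ a := le_trans (norm_nonneg _) (ha ⟨0, hN⟩)
  have hb0 : 0 ≤ b := le_trans (norm_nonneg _) (hb ⟨0, hN⟩)
  set C : Fin N → Matrix (Fin N → Fin d) (Fin N → Fin d) ℂ := fun k =>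
    (∑ j : Fin N, if (k : ℕ) ≤ (j : ℕ) ∧ (j : ℕ) < (k : ℕ) + RA then A k * B j - B j * A k else 0)
    + (∑ i : Fin N, if (k : ℕ) < (i : ℕ) ∧ (i : ℕ) < (k : ℕ) + RB then A i * B k - B k * A i else 0)
    with hCdef
  have hterm : ∀ (M M' : Matrix (Fin N → Fin d) (Fin N → Fin d) ℂ),
      ‖M‖ ≤ a → ‖M'‖ ≤ b → ‖M * M' - M' * M‖ ≤ 2 * (a * b) := by
    intro M M' hM hM'
    calc ‖M * M' - M' * M‖ ≤ ‖M * M'‖ + ‖M' * M‖ := norm_sub_le _ _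
      _ ≤ ‖M‖ * ‖M'‖ + ‖M'‖ * ‖M‖ := by
          gcongr <;> [exact norm_mul_le _ _; exact norm_mul_le _ _]
      _ ≤ a * b + b * a := by
          gcongr <;> first | assumption | exact norm_nonneg _
      _ = 2 * (a * b) := by ring
  refine ⟨C, ?_, ?_, ?_⟩
  · -- support
    intro k
    refine SupportedOn.add ?_ ?_
    · refine SupportedOn.fsum _ _ fun j _ => ?_
      split_ifs with hj
      · have hAk : SupportedOn (A k)
            {p : Fin N | (k : ℕ) ≤ (p : ℕ) ∧ (p : ℕ) < (k : ℕ) + (RA + RB - 1)} :=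
          (hA k).mono (by intro p hp; simp only [Set.mem_setOf_eq] at *; omega)
        have hBj : SupportedOn (B j)
            {p : Fin N | (k : ℕ) ≤ (p : ℕ) ∧ (p : ℕ) < (k : ℕ) + (RA + RB - 1)} :=
          (hB j).mono (by intro p hp; simp only [Set.mem_setOf_eq] at *; omega)
        exact (hAk.mul hBj).sub (hBj.mul hAk)
      · exact SupportedOn.zero'
    · refine SupportedOn.fsum _ _ fun i _ => ?_
      split_ifs with hi
      · have hAi : SupportedOn (A i)
            {p : Fin N | (k : ℕ) ≤ (p : ℕ) ∧ (p : ℕ) < (k : ℕ) + (RA + RB - 1)} :=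
          (hA i).mono (by intro p hp; simp only [Set.mem_setOf_eq] at *; omega)
        have hBk : SupportedOn (B k)
            {p : Fin N | (k : ℕ) ≤ (p : ℕ) ∧ (p : ℕ) < (k : ℕ) + (RA + RB - 1)} :=
          (hB k).mono (by intro p hp; simp only [Set.mem_setOf_eq] at *; omega)
        exact (hAi.mul hBk).sub (hBk.mul hAi)
      · exact SupportedOn.zero'
  · -- sum identity
    have pointwise : ∀ i j : Fin N, A i * B j - B j * A i =
        (if (i : ℕ) ≤ (j : ℕ) ∧ (j : ℕ) < (i : ℕ) + RA then A i * B j - B j * A i else 0)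
      + (if (j : ℕ) < (i : ℕ) ∧ (i : ℕ) < (j : ℕ) + RB then A i * B j - B j * A i else 0) := by
      intro i j
      by_cases h1 : (i : ℕ) ≤ (j : ℕ) ∧ (j : ℕ) < (i : ℕ) + RA
      · have h2 : ¬((j : ℕ) < (i : ℕ) ∧ (i : ℕ) < (j : ℕ) + RB) := by omega
        rw [if_pos h1, if_neg h2, add_zero]
      · by_cases h2 : (j : ℕ) < (i : ℕ) ∧ (i : ℕ) < (j : ℕ) + RB
        · rw [if_neg h1, if_pos h2, zero_add]
        · have hd : Disjoint {p : Fin N | (i : ℕ) ≤ (p : ℕ) ∧ (p : ℕ) < (i : ℕ) + RA}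
              {p : Fin N | (j : ℕ) ≤ (p : ℕ) ∧ (p : ℕ) < (j : ℕ) + RB} := by
            rw [Set.disjoint_left]
            intro p hp hq
            simp only [Set.mem_setOf_eq] at hp hq
            omega
          rw [commute_of_disjoint (hA i) (hB j) hd, if_neg h1, if_neg h2, sub_self, add_zero]
    calc (∑ i, A i) * (∑ i, B i) - (∑ i, B i) * (∑ i, A i)
        = ∑ i, ∑ j, (A i * B j - B j * A i) := by
          rw [Finset.sum_mul_sum, Finset.sum_mul_sum, Finset.sum_comm (s := Finset.univ)
            (t := Finset.univ) (f := fun i j => B i * A j)]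
          rw [← Finset.sum_sub_distrib]
          exact Finset.sum_congr rfl fun i _ => by rw [← Finset.sum_sub_distrib]
      _ = ∑ i : Fin N, ∑ j : Fin N, ((if (i : ℕ) ≤ (j : ℕ) ∧ (j : ℕ) < (i : ℕ) + RA
              then A i * B j - B j * A i else 0)
            + (if (j : ℕ) < (i : ℕ) ∧ (i : ℕ) < (j : ℕ) + RB
              then A i * B j - B j * A i else 0)) := by
          exact Finset.sum_congr rfl fun i _ => Finset.sum_congr rfl fun j _ => pointwise i j
      _ = ∑ k, C k := by
          rw [hCdef]
          simp only [Finset.sum_add_distrib]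
          congr 1
          exact Finset.sum_comm
  · -- norm bound
    intro k
    have hab : (0:ℝ) ≤ 2 * (a * b) := by positivity
    have hcard1 : (Finset.univ.filter
        (fun j : Fin N => (k : ℕ) ≤ (j : ℕ) ∧ (j : ℕ) < (k : ℕ) + RA)).card ≤ RA := by
      have := Finset.card_le_card_of_injOn
        (s := Finset.univ.filter (fun j : Fin N => (k : ℕ) ≤ (j : ℕ) ∧ (j : ℕ) < (k : ℕ) + RA))
        (t := Finset.Ico (k : ℕ) ((k : ℕ) + RA))
        (fun j : Fin N => (j : ℕ))
        (fun j hj => by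
          have hj' := (Finset.mem_filter.mp hj).2
          show (j : ℕ) ∈ Finset.Ico (k : ℕ) ((k : ℕ) + RA)
          exact Finset.mem_Ico.mpr (by omega))
        (fun x _ y _ h => Fin.val_injective h)
      simpa using this
    have hcard2 : (Finset.univ.filter
        (fun i : Fin N => (k : ℕ) < (i : ℕ) ∧ (i : ℕ) < (k : ℕ) + RB)).card ≤ RB - 1 := by
      have := Finset.card_le_card_of_injOn
        (s := Finset.univ.filter (fun i : Fin N => (k : ℕ) < (i : ℕ) ∧ (i : ℕ) < (k : ℕ) + RB))
        (t := Finset.Ico ((k : ℕ) + 1) ((k : ℕ) + RB))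
        (fun i : Fin N => (i : ℕ))
        (fun i hi => by
          have hi' := (Finset.mem_filter.mp hi).2
          show (i : ℕ) ∈ Finset.Ico ((k : ℕ) + 1) ((k : ℕ) + RB)
          exact Finset.mem_Ico.mpr (by omega))
        (fun x _ y _ h => Fin.val_injective h)
      simp only [Nat.card_Ico] at this
      omega
    have bound1 : ‖∑ j : Fin N, if (k : ℕ) ≤ (j : ℕ) ∧ (j : ℕ) < (k : ℕ) + RA
        then A k * B j - B j * A k else 0‖ ≤ (RA : ℝ) * (2 * (a * b)) := by
      calc ‖∑ j : Fin N, if (k : ℕ) ≤ (j : ℕ) ∧ (j : ℕ) < (k : ℕ) + RA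
            then A k * B j - B j * A k else 0‖
          ≤ ∑ j : Fin N, ‖if (k : ℕ) ≤ (j : ℕ) ∧ (j : ℕ) < (k : ℕ) + RA
            then A k * B j - B j * A k else 0‖ := norm_sum_le _ _
        _ ≤ ∑ j : Fin N, (if (k : ℕ) ≤ (j : ℕ) ∧ (j : ℕ) < (k : ℕ) + RA
            then 2 * (a * b) else 0) := by
            refine Finset.sum_le_sum fun j _ => ?_
            split_ifs with hj
            · exact hterm _ _ (ha k) (hb j)
            · simp
        _ = ((Finset.univ.filter
            (fun j : Fin N => (k : ℕ) ≤ (j : ℕ) ∧ (j : ℕ) < (k : ℕ) + RA)).card : ℝ)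
              * (2 * (a * b)) := by
            rw [Finset.sum_ite, Finset.sum_const, Finset.sum_const_zero, add_zero,
              nsmul_eq_mul]
        _ ≤ (RA : ℝ) * (2 * (a * b)) :=
            mul_le_mul_of_nonneg_right (Nat.cast_le.mpr hcard1) hab
    have bound2 : ‖∑ i : Fin N, if (k : ℕ) < (i : ℕ) ∧ (i : ℕ) < (k : ℕ) + RB
        then A i * B k - B k * A i else 0‖ ≤ ((RB - 1 : ℕ) : ℝ) * (2 * (a * b)) := by
      calc ‖∑ i : Fin N, if (k : ℕ) < (i : ℕ) ∧ (i : ℕ) < (k : ℕ) + RB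
            then A i * B k - B k * A i else 0‖
          ≤ ∑ i : Fin N, ‖if (k : ℕ) < (i : ℕ) ∧ (i : ℕ) < (k : ℕ) + RB
            then A i * B k - B k * A i else 0‖ := norm_sum_le _ _
        _ ≤ ∑ i : Fin N, (if (k : ℕ) < (i : ℕ) ∧ (i : ℕ) < (k : ℕ) + RB
            then 2 * (a * b) else 0) := by
            refine Finset.sum_le_sum fun i _ => ?_
            split_ifs with hi
            · exact hterm _ _ (ha i) (hb k)
            · simp
        _ = ((Finset.univ.filter
            (fun i : Fin N => (k : ℕ) < (i : ℕ) ∧ (i : ℕ) < (k : ℕ) + RB)).card : ℝ)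
              * (2 * (a * b)) := by
            rw [Finset.sum_ite, Finset.sum_const, Finset.sum_const_zero, add_zero,
              nsmul_eq_mul]
        _ ≤ ((RB - 1 : ℕ) : ℝ) * (2 * (a * b)) :=
            mul_le_mul_of_nonneg_right (Nat.cast_le.mpr hcard2) hab
    calc ‖C k‖ ≤ ‖∑ j : Fin N, if (k : ℕ) ≤ (j : ℕ) ∧ (j : ℕ) < (k : ℕ) + RA
            then A k * B j - B j * A k else 0‖
          + ‖∑ i : Fin N, if (k : ℕ) < (i : ℕ) ∧ (i : ℕ) < (k : ℕ) + RB
            then A i * B k - B k * A i else 0‖ := norm_add_le _ _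
      _ ≤ (RA : ℝ) * (2 * (a * b)) + ((RB - 1 : ℕ) : ℝ) * (2 * (a * b)) :=
          add_le_add bound1 bound2
      _ = 2 * ((RA : ℝ) + (RB : ℝ) - 1) * a * b := by
          rw [Nat.cast_sub hRB]; push_cast; ring
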